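/- arXiv:1401.2335 — 2 statements merged into one kernel-verified Lean document; each statement's English description precedes it below -/
import Mathlib

section
/- For every n ≥ 1 and every ℤ-valued 2-cocycle φ for A_n, one has φ(x, 2^n) = φ(2^n − 1, 2^n) for every x in {1, …, 2^n}; that is, the last column of every 2-cocycle is constant. -/
/-- `op` is the Laver table operation on `{1, …, 2^n}`: it maps the set to itself,
satisfies `x * 1 = x + 1` for `x < 2^n`, `2^n * 1 = 1`, and
`x * (y * 1) = (x * y) * (x * 1)`. -/
def IsLaverOp (n : ℕ) (op : ℕ → ℕ → ℕ) : Prop :=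
  (∀ x y, 1 ≤ x → x ≤ 2 ^ n → 1 ≤ y → y ≤ 2 ^ n → 1 ≤ op x y ∧ op x y ≤ 2 ^ n) ∧
  (∀ x, 1 ≤ x → x < 2 ^ n → op x 1 = x + 1) ∧
  (op (2 ^ n) 1 = 1) ∧
  (∀ x y, 1 ≤ x → x ≤ 2 ^ n → 1 ≤ y → y ≤ 2 ^ n → op x (op y 1) = op (op x y) (op x 1))

/-- `φ` is a `ℤ`-valued rack 2-cocycle for the Laver table `A_n` with operation `op`. -/
def Is2Cocycle (n : ℕ) (op : ℕ → ℕ → ℕ) (φ : ℕ → ℕ → ℤ) : Prop :=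
  ∀ x y z, 1 ≤ x → x ≤ 2 ^ n → 1 ≤ y → y ≤ 2 ^ n → 1 ≤ z → z ≤ 2 ^ n →
    φ (op x y) (op x z) + φ x z = φ x (op y z) + φ y z

/-- The last row of the Laver table acts as the identity. -/
lemma laver_top_row (n : ℕ) (op : ℕ → ℕ → ℕ) (h : IsLaverOp n op) :
    ∀ y, 1 ≤ y → y ≤ 2 ^ n → op (2 ^ n) y = y := by
  obtain ⟨hr, hs, h1, hld⟩ := h
  intro y
  induction y with
  | zero => intro h0; omega
  | succ y ih =>
    intro _ hy
    rcases Nat.eq_zero_or_pos y with hy0 | hy1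
    · subst hy0; exact h1
    · have hyN : y < 2 ^ n := by omega
      have hsy : op y 1 = y + 1 := hs y hy1 hyN
      have := hld (2 ^ n) y Nat.one_le_two_pow le_rfl hy1 (by omega)
      rw [hsy, h1, ih hy1 (by omega)] at this
      rw [this, hsy]

/-- Every entry of row `x < 2^n` is strictly greater than `x`. -/
lemma laver_row_gt (n : ℕ) (op : ℕ → ℕ → ℕ) (h : IsLaverOp n op) :
    ∀ x, 1 ≤ x → x < 2 ^ n → ∀ y, 1 ≤ y → y ≤ 2 ^ n → x < op x y := by
  obtain ⟨hr, hs, h1, hld⟩ := h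
  have key : ∀ k x, 2 ^ n - x ≤ k → 1 ≤ x → x < 2 ^ n →
      ∀ y, 1 ≤ y → y ≤ 2 ^ n → x < op x y := by
    intro k
    induction k with
    | zero => intro x hk h1x h2x; omega
    | succ k ih =>
      intro x hk hx1 hxN y
      induction y with
      | zero => intro h0; omega
      | succ y ihy =>
        intro _ hy
        rcases Nat.eq_zero_or_pos y with hy0 | hy1
        · subst hy0; rw [hs x hx1 hxN]; omega
        · have hyN : y < 2 ^ n := by omega
          have hstep : op x (y + 1) = op (op x y) (x + 1) := by
            have := hld x y hx1 (le_of_lt hxN) hy1 (le_of_lt hyN)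
            rwa [hs y hy1 hyN, hs x hx1 hxN] at this
          have hxy : x < op x y := ihy hy1 (le_of_lt hyN)
          have hb := hr x y hx1 (le_of_lt hxN) hy1 (le_of_lt hyN)
          rcases eq_or_lt_of_le hb.2 with htop | hlt
          · rw [hstep, htop,
              laver_top_row n op ⟨hr, hs, h1, hld⟩ (x + 1) (by omega) (by omega)]
            omega
          · have := ih (op x y) (by omega) (by omega) hlt (x + 1) (by omega) (by omega)
            rw [hstep]; omega
  intro x hx1 hxN
  exact key (2 ^ n) x (by omega) hx1 hxN

/-- Every row `x < 2^n` reaches the value `2^n`. -/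
lemma laver_row_reaches_top (n : ℕ) (op : ℕ → ℕ → ℕ) (h : IsLaverOp n op) :
    ∀ x, 1 ≤ x → x < 2 ^ n → ∃ p, 1 ≤ p ∧ p ≤ 2 ^ n ∧ op x p = 2 ^ n := by
  intro x hx1 hxN
  obtain ⟨hr, hs, h1, hld⟩ := h
  have claim : ∀ y, 1 ≤ y → y ≤ 2 ^ n →
      (∃ p, 1 ≤ p ∧ p ≤ y ∧ op x p = 2 ^ n) ∨ x + y ≤ op x y := by
    intro y
    induction y with
    | zero => intro h0; omega
    | succ y ihy =>
      intro _ hy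
      rcases Nat.eq_zero_or_pos y with hy0 | hy1
      · subst hy0; right; rw [hs x hx1 hxN]
      · have hyN : y < 2 ^ n := by omega
        rcases ihy hy1 (le_of_lt hyN) with ⟨p, hp1, hp2, hp3⟩ | hbig
        · exact Or.inl ⟨p, hp1, by omega, hp3⟩
        · have hb := hr x y hx1 (le_of_lt hxN) hy1 (le_of_lt hyN)
          rcases eq_or_lt_of_le hb.2 with htop | hlt
          · exact Or.inl ⟨y, hy1, by omega, htop⟩
          · right
            have hstep : op x (y + 1) = op (op x y) (x + 1) := by
              have := hld x y hx1 (le_of_lt hxN) hy1 (le_of_lt hyN)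
              rwa [hs y hy1 hyN, hs x hx1 hxN] at this
            have := laver_row_gt n op ⟨hr, hs, h1, hld⟩ (op x y) hb.1 hlt
              (x + 1) (by omega) (by omega)
            rw [hstep]; omega
  rcases claim (2 ^ n) (Nat.one_le_two_pow) le_rfl with ⟨p, hp1, hp2, hp3⟩ | hbig
  · exact ⟨p, hp1, hp2, hp3⟩
  · have hb := hr x (2 ^ n) hx1 (le_of_lt hxN) Nat.one_le_two_pow le_rfl
    omega

/-- The last column of every 2-cocycle for `A_n` is constant. -/
theorem laver_two_cocycle_last_column (n : ℕ) (hn : 1 ≤ n)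
    (op : ℕ → ℕ → ℕ) (h : IsLaverOp n op)
    (φ : ℕ → ℕ → ℤ) (hφ : Is2Cocycle n op φ) :
    ∀ x, 1 ≤ x → x ≤ 2 ^ n → φ x (2 ^ n) = φ (2 ^ n - 1) (2 ^ n) := by
  have hN2 : 2 ≤ 2 ^ n := by
    calc 2 = 2 ^ 1 := rfl
    _ ≤ 2 ^ n := Nat.pow_le_pow_right (by omega) hn
  have hr := h.1
  have key : ∀ k x, 2 ^ n - x ≤ k → 1 ≤ x → x ≤ 2 ^ n →
      φ x (2 ^ n) = φ (2 ^ n) (2 ^ n) := by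
    intro k
    induction k with
    | zero =>
      intro x hk hx1 hx2
      have : x = 2 ^ n := by omega
      rw [this]
    | succ k ih =>
      intro x hk hx1 hx2
      rcases eq_or_lt_of_le hx2 with htop | hlt
      · rw [htop]
      · obtain ⟨p, hp1, hp2, hp3⟩ := laver_row_reaches_top n op h x hx1 hlt
        have hco := hφ x x p hx1 hx2 hx1 hx2 hp1 hp2
        rw [hp3] at hco
        have heq : φ (op x x) (2 ^ n) = φ x (2 ^ n) := by omega
        have hgt : x < op x x := laver_row_gt n op h x hx1 hlt x hx1 hx2
        have hb := hr x x hx1 hx2 hx1 hx2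
        rw [← heq]
        exact ih (op x x) (by omega) hb.1 hb.2
  intro x hx1 hx2
  rw [key (2 ^ n) x (by omega) hx1 hx2,
    key (2 ^ n) (2 ^ n - 1) (by omega) (by omega) (by omega)]
end

section
/- For every n ≥ 1, every ℤ-valued 2-cocycle φ for A_n admits the decomposition φ(x, y) = Σ_{q=1}^{2^n − 1} (φ(2^n − 1, q) − φ(2^n − 1, 2^n)) · φ_{q,n}(x, y) + φ(2^n − 1, 2^n) for all x, y in {1, …, 2^n}; moreover, if integers λ_1, …, λ_{2^n − 1}, λ satisfy Σ_{q=1}^{2^n − 1} λ_q · φ_{q,n}(x, y) + λ = 0 for all x, y, then λ_1 = ⋯ = λ_{2^n − 1} = λ = 0. -/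
/-- The coboundary `φ_{q,n}(x, y) = δ_{y,q} − δ_{x *_n y, q}`. -/
def laverPhi (op : ℕ → ℕ → ℕ) (q x y : ℕ) : ℤ :=
  (if y = q then 1 else 0) - (if op x y = q then 1 else 0)

lemma laver_one_le (n : ℕ) : 1 ≤ 2 ^ n := Nat.one_le_two_pow

/-- The last row of a Laver table is the identity. -/
lemma laver_idrow {n : ℕ} {op : ℕ → ℕ → ℕ} (h : IsLaverOp n op) :
    ∀ y, 1 ≤ y → y ≤ 2 ^ n → op (2 ^ n) y = y := by
  intro y
  induction y with
  | zero => intro h1 _; omega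
  | succ m ih =>
    intro h1 h2
    rcases Nat.eq_zero_or_pos m with hm | hm
    · subst hm; exact h.2.2.1
    · have hmN : m < 2 ^ n := by omega
      have hd := h.2.2.2 (2 ^ n) m (laver_one_le n) le_rfl hm (le_of_lt hmN)
      rw [h.2.1 m hm hmN, ih hm (le_of_lt hmN), h.2.2.1] at hd
      rw [hd, h.2.1 m hm hmN]

lemma laver_gt_aux {n : ℕ} {op : ℕ → ℕ → ℕ} (h : IsLaverOp n op) :
    ∀ k x, 2 ^ n - x ≤ k → 1 ≤ x → x < 2 ^ n →
      ∀ y, 1 ≤ y → y ≤ 2 ^ n → x < op x y := by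
  intro k
  induction k with
  | zero => intro x hk hx1 hxN; omega
  | succ k ih =>
    intro x hk hx1 hxN y
    induction y with
    | zero => intro h1 _; omega
    | succ m ihy =>
      intro h1 h2
      rcases Nat.eq_zero_or_pos m with hm | hm
      · subst hm; rw [h.2.1 x hx1 hxN]; omega
      · have hmN : m < 2 ^ n := by omega
        have hw := h.1 x m hx1 (le_of_lt hxN) hm (le_of_lt hmN)
        have hxw : x < op x m := ihy hm (le_of_lt hmN)
        have hstep := h.2.2.2 x m hx1 (le_of_lt hxN) hm (le_of_lt hmN)
        rw [h.2.1 m hm hmN, h.2.1 x hx1 hxN] at hstep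
        rcases eq_or_lt_of_le hw.2 with heq | hlt
        · rw [hstep, heq, laver_idrow h (x + 1) (by omega) (by omega)]; omega
        · have := ih (op x m) (by omega) hw.1 hlt (x + 1) (by omega) (by omega)
          rw [hstep]; omega

/-- Each row of a Laver table (except the last one) is strictly above the diagonal. -/
lemma laver_gt {n : ℕ} {op : ℕ → ℕ → ℕ} (h : IsLaverOp n op) :
    ∀ x y, 1 ≤ x → x < 2 ^ n → 1 ≤ y → y ≤ 2 ^ n → x < op x y :=
  fun x y hx1 hxN hy1 hyN => laver_gt_aux h (2 ^ n - x) x le_rfl hx1 hxN y hy1 hyN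

/-- The last column of a Laver table is constantly `2^n`. -/
lemma laver_colN {n : ℕ} {op : ℕ → ℕ → ℕ} (h : IsLaverOp n op) :
    ∀ x, 1 ≤ x → x ≤ 2 ^ n → op x (2 ^ n) = 2 ^ n := by
  intro x hx1 hxN
  rcases eq_or_lt_of_le hxN with heq | hlt
  · rw [heq]; exact laver_idrow h (2 ^ n) (laver_one_le n) le_rfl
  · have hd := h.2.2.2 x (2 ^ n) hx1 (le_of_lt hlt) (laver_one_le n) le_rfl
    rw [h.2.2.1, h.2.1 x hx1 hlt] at hd
    -- hd : x + 1 = op (op x (2 ^ n)) (x + 1)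
    have hw := h.1 x (2 ^ n) hx1 (le_of_lt hlt) (laver_one_le n) le_rfl
    have hxw := laver_gt h x (2 ^ n) hx1 hlt (laver_one_le n) le_rfl
    rcases eq_or_lt_of_le hw.2 with heq | hlt2
    · exact heq
    · have := laver_gt h (op x (2 ^ n)) (x + 1) hw.1 hlt2 (by omega) (by omega)
      rw [← hd] at this; omega

/-- The row `2^n - 1` of a Laver table is constantly `2^n`. -/
lemma laver_rowe {n : ℕ} {op : ℕ → ℕ → ℕ} (h : IsLaverOp n op) (hn : 1 ≤ n) :
    ∀ y, 1 ≤ y → y ≤ 2 ^ n → op (2 ^ n - 1) y = 2 ^ n := by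
  have hN : 2 ≤ 2 ^ n := by
    calc (2 : ℕ) = 2 ^ 1 := (pow_one 2).symm
    _ ≤ 2 ^ n := Nat.pow_le_pow_right (by norm_num) hn
  have he1 : op (2 ^ n - 1) 1 = 2 ^ n := by
    rw [h.2.1 (2 ^ n - 1) (by omega) (by omega)]; omega
  intro y
  induction y with
  | zero => intro h1 _; omega
  | succ m ih =>
    intro h1 h2
    rcases Nat.eq_zero_or_pos m with hm | hm
    · subst hm; exact he1
    · have hmN : m < 2 ^ n := by omega
      have hd := h.2.2.2 (2 ^ n - 1) m (by omega) (by omega) hm (by omega)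
      rw [h.2.1 m hm hmN, ih hm (by omega), he1,
        laver_idrow h (2 ^ n) (laver_one_le n) le_rfl] at hd
      exact hd

/-- Every 2-cocycle for `A_n` decomposes over the coboundaries `φ_{q,n}`, `1 ≤ q < 2^n`,
together with the constant cocycle, and this family is linearly independent. -/
theorem laver_two_cocycle_basis (n : ℕ) (hn : 1 ≤ n)
    (op : ℕ → ℕ → ℕ) (h : IsLaverOp n op) :
    (∀ φ : ℕ → ℕ → ℤ, Is2Cocycle n op φ →
      ∀ x y, 1 ≤ x → x ≤ 2 ^ n → 1 ≤ y → y ≤ 2 ^ n →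
        φ x y = (∑ q ∈ Finset.Icc 1 (2 ^ n - 1),
            (φ (2 ^ n - 1) q - φ (2 ^ n - 1) (2 ^ n)) * laverPhi op q x y)
          + φ (2 ^ n - 1) (2 ^ n)) ∧
    (∀ (lam : ℕ → ℤ) (c : ℤ),
      (∀ x y, 1 ≤ x → x ≤ 2 ^ n → 1 ≤ y → y ≤ 2 ^ n →
        (∑ q ∈ Finset.Icc 1 (2 ^ n - 1), lam q * laverPhi op q x y) + c = 0) →
      (∀ q, 1 ≤ q → q ≤ 2 ^ n - 1 → lam q = 0) ∧ c = 0) := by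
  have hN : 2 ≤ 2 ^ n := by
    calc (2 : ℕ) = 2 ^ 1 := (pow_one 2).symm
    _ ≤ 2 ^ n := Nat.pow_le_pow_right (by norm_num) hn
  have he1 : (1 : ℕ) ≤ 2 ^ n - 1 := by omega
  have heN : 2 ^ n - 1 ≤ 2 ^ n := by omega
  have hrowe := laver_rowe h hn
  constructor
  · intro φ hφ x y hx1 hxN hy1 hyN
    have hNN : φ (2 ^ n) (2 ^ n) = φ (2 ^ n - 1) (2 ^ n) := by
      have hc := hφ (2 ^ n - 1) (2 ^ n - 1) (2 ^ n) he1 heN he1 heN (laver_one_le n) le_rfl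
      rw [hrowe (2 ^ n - 1) he1 heN, hrowe (2 ^ n) (laver_one_le n) le_rfl] at hc
      omega
    have hkey := hφ (2 ^ n - 1) x y he1 heN hx1 hxN hy1 hyN
    rw [hrowe x hx1 hxN, hrowe y hy1 hyN] at hkey
    -- hkey : φ (2^n) (2^n) + φ (2^n-1) y = φ (2^n-1) (op x y) + φ x y
    have hop := h.1 x y hx1 hxN hy1 hyN
    have hsum : ∀ z, 1 ≤ z → z ≤ 2 ^ n →
        (∑ q ∈ Finset.Icc 1 (2 ^ n - 1),
          (φ (2 ^ n - 1) q - φ (2 ^ n - 1) (2 ^ n)) * (if z = q then (1 : ℤ) else 0))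
        = φ (2 ^ n - 1) z - φ (2 ^ n - 1) (2 ^ n) := by
      intro z hz1 hzN
      simp only [mul_ite, mul_one, mul_zero]
      rw [Finset.sum_ite_eq]
      by_cases hz : z ≤ 2 ^ n - 1
      · rw [if_pos (Finset.mem_Icc.mpr ⟨hz1, hz⟩)]
      · have hzn : z = 2 ^ n := by omega
        rw [if_neg (by simp [Finset.mem_Icc]; omega), hzn, sub_self]
    simp only [laverPhi, mul_sub]
    rw [Finset.sum_sub_distrib, hsum y hy1 hyN, hsum (op x y) hop.1 hop.2]
    omega
  · intro lam c hz
    have hc : c = 0 := by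
      have hv := hz (2 ^ n) 1 (laver_one_le n) le_rfl le_rfl (by omega)
      have hzero : ∀ q ∈ Finset.Icc 1 (2 ^ n - 1), lam q * laverPhi op q (2 ^ n) 1 = 0 := by
        intro q hq
        simp [laverPhi, h.2.2.1]
      rw [Finset.sum_congr rfl hzero, Finset.sum_const_zero, zero_add] at hv
      exact hv
    refine ⟨?_, hc⟩
    intro q hq1 hq2
    have hrq := hrowe q hq1 (by omega)
    have hv := hz (2 ^ n - 1) q he1 heN hq1 (by omega)
    rw [hc, add_zero] at hv
    have hzero2 : ∀ p ∈ Finset.Icc 1 (2 ^ n - 1),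
        lam p * laverPhi op p (2 ^ n - 1) q = lam p * (if q = p then (1 : ℤ) else 0) := by
      intro p hp
      have hp' := Finset.mem_Icc.mp hp
      have hne : ¬(2 ^ n = p) := by omega
      unfold laverPhi
      rw [hrq, if_neg hne, sub_zero]
    rw [Finset.sum_congr rfl hzero2] at hv
    simp only [mul_ite, mul_one, mul_zero] at hv
    rw [Finset.sum_ite_eq, if_pos (Finset.mem_Icc.mpr ⟨hq1, hq2⟩)] at hv
    exact hv
end
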